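/- In a median graph, the convex hull of a finite set of vertices (the smallest convex set of vertices containing it) is finite. -/

import Mathlib

open SimpleGraph

/-- A graph is median if it is connected and any three vertices admit a unique median. -/
def MedianGraph {V : Type*} (X : SimpleGraph V) : Prop :=
  X.Connected ∧ ∀ x y z : V, ∃! m : V,
    X.dist x m + X.dist m y = X.dist x y ∧
    X.dist y m + X.dist m z = X.dist y z ∧
    X.dist x m + X.dist m z = X.dist x z

/-- A set of vertices is convex if it contains every vertex on a geodesic between
two of its points. -/
def IsConvex {V : Type*} (X : SimpleGraph V) (S : Set V) : Prop :=
  ∀ x ∈ S, ∀ y ∈ S, ∀ w : V, X.dist x w + X.dist w y = X.dist x y → w ∈ S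

/-- A halfspace is a nonempty proper convex subset with convex complement. -/
def IsHalfspace {V : Type*} (X : SimpleGraph V) (D : Set V) : Prop :=
  D.Nonempty ∧ D ≠ Set.univ ∧ IsConvex X D ∧ IsConvex X Dᶜ

/-- The hypercube graph `Q_n`: vertices are functions `Fin n → Bool`,
two being adjacent iff they differ at exactly one coordinate. -/
def cubeGraph (n : ℕ) : SimpleGraph (Fin n → Bool) where
  Adj f g := ∃! i, f i ≠ g i
  symm := by
    constructor
    rintro f g ⟨i, hi, hu⟩
    exact ⟨i, hi.symm, fun j hj => hu j hj.symm⟩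
  loopless := by
    constructor
    rintro f ⟨i, hi, -⟩
    exact hi rfl

namespace MGAux

variable {V : Type*} {X : SimpleGraph V}

/-- Betweenness: `w` lies on a geodesic from `a` to `c`. -/
def Btw (X : SimpleGraph V) (a w c : V) : Prop :=
  X.dist a w + X.dist w c = X.dist a c

lemma dcomm (a b : V) : X.dist a b = X.dist b a := SimpleGraph.dist_comm

section basic
variable (hX : MedianGraph X)
include hX

lemma tri (a b c : V) : X.dist a c ≤ X.dist a b + X.dist b c :=
  hX.1.dist_triangle

lemma eq0 {a b : V} (h : X.dist a b = 0) : a = b :=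
  (hX.1.dist_eq_zero_iff).1 h

lemma btw_refl_left (a c : V) : Btw X a a c := by
  simp [Btw, SimpleGraph.dist_self]

lemma btw_refl_right (a c : V) : Btw X a c c := by
  simp [Btw, SimpleGraph.dist_self]

lemma btw_symm {a w c : V} (h : Btw X a w c) : Btw X c w a := by
  unfold Btw at *
  rw [dcomm c w, dcomm w a, dcomm c a]
  omega

lemma btw_trans {a b c x : V} (hb : Btw X a b c) (hx : Btw X a x b) : Btw X a x c := by
  unfold Btw at *
  have h1 := tri hX x b c
  have h2 := tri hX a x c
  omega

/-- transitivity on the other side -/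
lemma btw_trans' {a b c x : V} (hb : Btw X a b c) (hx : Btw X b x c) : Btw X a x c :=
  btw_symm hX (btw_trans hX (btw_symm hX hb) (btw_symm hX hx))

lemma med_exists (x y z : V) : ∃ m : V, Btw X x m y ∧ Btw X y m z ∧ Btw X x m z :=
  ((hX.2 x y z).exists).imp (fun _ h => h)

lemma med_unique {x y z m m' : V}
    (h : Btw X x m y ∧ Btw X y m z ∧ Btw X x m z)
    (h' : Btw X x m' y ∧ Btw X y m' z ∧ Btw X x m' z) : m = m' :=
  (hX.2 x y z).unique h h'

lemma adj_dist (h : X.Adj a b) : X.dist a b = 1 :=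
  (X.dist_eq_one_iff_adj).2 h

/-- Adjacent vertices have distances to any vertex differing by exactly one. -/
lemma adj_succ (h : X.Adj x y) (z : V) :
    X.dist z y = X.dist z x + 1 ∨ X.dist z x = X.dist z y + 1 := by
  obtain ⟨m, h1, h2, h3⟩ := med_exists hX x y z
  have hxy : X.dist x y = 1 := adj_dist hX h
  have hzx : X.dist z x = X.dist x z := dcomm z x
  have hzy : X.dist z y = X.dist y z := dcomm z y
  have hyx : X.dist y x = X.dist x y := dcomm y x
  unfold Btw at h1 h2 h3
  have : X.dist x m = 0 ∨ X.dist m y = 0 := by omega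
  rcases this with h0 | h0
  · -- m = x
    have := eq0 hX h0
    subst this
    left
    omega
  · have : y = m := eq0 hX (by rwa [dcomm] at h0)
    subst this
    right
    omega

lemma triangle_free (hxy : X.Adj x y) (hyz : X.Adj y z) (hxz : X.Adj x z) : False := by
  obtain ⟨m, h1, h2, h3⟩ := med_exists hX x y z
  have d1 : X.dist x y = 1 := adj_dist hX hxy
  have d2 : X.dist y z = 1 := adj_dist hX hyz
  have d3 : X.dist x z = 1 := adj_dist hX hxz
  have hyx : X.dist y x = X.dist x y := dcomm y x
  unfold Btw at h1 h2 h3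
  have hx : X.dist x m = 0 ∨ X.dist m y = 0 := by omega
  rcases hx with h0 | h0
  · have := eq0 hX h0; subst this; omega
  · have : y = m := eq0 hX (by rwa [SimpleGraph.dist_comm] at h0)
    subst this; omega

/-- No K_{2,3}: two distinct vertices cannot have three distinct common neighbours. -/
lemma no_K23 {u m a b c : V} (hum : u ≠ m)
    (ha1 : X.Adj u a) (ha2 : X.Adj m a) (hb1 : X.Adj u b) (hb2 : X.Adj m b)
    (hc1 : X.Adj u c) (hc2 : X.Adj m c)
    (hab : a ≠ b) (hac : a ≠ c) (hbc : b ≠ c) : False := by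
  have dist2 : ∀ p q : V, p ≠ q → X.Adj u p → X.Adj u q → X.Adj m p → X.Adj m q →
      X.dist p q = 2 := by
    intro p q hpq hup huq hmp hmq
    have hle : X.dist p q ≤ 2 := by
      have h := tri hX p u q
      rw [dcomm p u, adj_dist hX hup] at h
      rw [adj_dist hX huq] at h
      omega
    have hne0 : X.dist p q ≠ 0 := fun h => hpq (eq0 hX h)
    have hne1 : X.dist p q ≠ 1 := by
      intro h
      exact triangle_free hX hup ((X.dist_eq_one_iff_adj).1 h) huq
    omega
  have dab := dist2 a b hab ha1 hb1 ha2 hb2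
  have dac := dist2 a c hac ha1 hc1 ha2 hc2
  have dbc := dist2 b c hbc hb1 hc1 hb2 hc2
  have med_u : Btw X a u b ∧ Btw X b u c ∧ Btw X a u c := by
    unfold Btw
    rw [dcomm a u, dcomm b u, adj_dist hX ha1, adj_dist hX hb1, adj_dist hX hc1,
      dab, dbc, dac]
    omega
  have med_m : Btw X a m b ∧ Btw X b m c ∧ Btw X a m c := by
    unfold Btw
    rw [dcomm a m, dcomm b m, adj_dist hX ha2, adj_dist hX hb2, adj_dist hX hc2,
      dab, dbc, dac]
    omega
  exact hum (med_unique hX med_u med_m)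

end basic

section walls
variable (hX : MedianGraph X)
include hX

/-- First step of a geodesic. -/
lemma exists_step {u w : V} (h : X.dist u w ≠ 0) :
    ∃ p : V, X.Adj u p ∧ X.dist p w + 1 = X.dist u w := by
  obtain ⟨q, hq⟩ := SimpleGraph.exists_walk_of_dist_ne_zero h
  cases q with
  | nil => rw [← hq] at h; exact absurd rfl h
  | cons hadj q' =>
    rename_i p
    refine ⟨p, hadj, ?_⟩
    have h1 : X.dist p w ≤ q'.length := SimpleGraph.dist_le q'
    have h2 : X.dist u w ≤ X.dist u p + X.dist p w := tri hX u p w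
    rw [adj_dist hX hadj] at h2
    simp only [SimpleGraph.Walk.length_cons] at hq
    omega

/-- Points between a vertex on the `x'` side and `x'` stay on the `x'` side. -/
lemma side_persist {x x' z w : V} (hadj : X.Adj x x')
    (hz : X.dist z x = X.dist z x' + 1) (hw : Btw X z w x') :
    X.dist w x = X.dist w x' + 1 := by
  unfold Btw at hw
  have h1 : X.dist z x ≤ X.dist z w + X.dist w x := tri hX z w x
  have h2 : X.dist w x ≤ X.dist w x' + X.dist x' x := tri hX w x' x
  have h3 : X.dist x' x = 1 := adj_dist hX hadj.symm
  omega

/-- Local step for convexity of halfspaces. -/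
lemma Hlocal {x x' u v p : V} (hadj : X.Adj x x') (hup : X.Adj u p)
    (hb : Btw X u p v)
    (hu : X.dist u x' = X.dist u x + 1) (hv : X.dist v x' = X.dist v x + 1)
    (hp : X.dist p x = X.dist p x' + 1) : False := by
  have hdup : X.dist u p = 1 := adj_dist hX hup
  have hxx' : X.dist x x' = 1 := adj_dist hX hadj
  -- basic distance relations
  have e1 : X.dist u x' ≤ X.dist u p + X.dist p x' := tri hX u p x'
  have e2 : X.dist p x ≤ X.dist p u + X.dist u x := tri hX p u x
  have e3 : X.dist p u = X.dist u p := dcomm p u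
  have hpx' : X.dist p x' = X.dist u x := by omega
  -- z* = median of (u, v, x), which is on the x side
  obtain ⟨z, hz1, hz2, hz3⟩ := med_exists hX u v x
  have hzside : X.dist z x' = X.dist z x + 1 := by
    -- z ∈ I(u, x) and u is on the x side
    exact side_persist hX hadj.symm hu hz3
  -- z is a median of (u, v, x')
  have hzmed : Btw X u z v ∧ Btw X v z x' ∧ Btw X u z x' := by
    refine ⟨hz1, ?_, ?_⟩
    · unfold Btw at hz2 ⊢; omega
    · unfold Btw at hz3 ⊢; omega
  -- w = median of (p, v, x'), which is on the x' side
  obtain ⟨w, hw1, hw2, hw3⟩ := med_exists hX p v x'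
  have hwside : X.dist w x = X.dist w x' + 1 := side_persist hX hadj hp hw3
  -- w is a median of (u, v, x')
  have hduw : X.dist u w = X.dist p w + 1 := by
    have t1 : X.dist u w ≤ X.dist u p + X.dist p w := tri hX u p w
    -- w ∈ I(p,v) and p ∈ I(u,v) so w ∈ I(u,v)
    have t2 : Btw X u w v := btw_trans' hX hb hw1
    unfold Btw at t2 hw1 hb
    omega
  have hwmed : Btw X u w v ∧ Btw X v w x' ∧ Btw X u w x' := by
    refine ⟨btw_trans' hX hb hw1, hw2, ?_⟩
    unfold Btw at hw3 hb ⊢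
    omega
  have := med_unique hX hzmed hwmed
  subst this
  omega

/-- Halfspaces (sides of an edge) are convex. -/
lemma side_convex {x x' : V} (hadj : X.Adj x x') :
    ∀ (n : ℕ) (z₁ z₂ w : V), X.dist z₁ z₂ = n →
    X.dist z₁ x' = X.dist z₁ x + 1 → X.dist z₂ x' = X.dist z₂ x + 1 →
    Btw X z₁ w z₂ → X.dist w x' = X.dist w x + 1 := by
  intro n
  induction n using Nat.strong_induction_on with
  | _ n ih =>
    intro z₁ z₂ w hn h1 h2 hw
    by_cases hwz : w = z₁
    · subst hwz; exact h1
    · have hne : X.dist z₁ w ≠ 0 := fun h => hwz (eq0 hX h).symm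
      obtain ⟨p, hp1, hp2⟩ := exists_step hX hne
      unfold Btw at hw
      have hd1 : X.dist z₁ p = 1 := adj_dist hX hp1
      have htr : X.dist z₁ z₂ ≤ X.dist z₁ p + X.dist p z₂ := tri hX z₁ p z₂
      have htr2 : X.dist p z₂ ≤ X.dist p w + X.dist w z₂ := tri hX p w z₂
      have hpz : X.dist p z₂ = X.dist p w + X.dist w z₂ := by omega
      have hpb : Btw X z₁ p z₂ := by unfold Btw; omega
      -- p must be on the x side, else Hlocal gives a contradiction
      have hside : X.dist p x' = X.dist p x + 1 := by
        rcases adj_succ hX hadj p with h | h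
        · exact h
        · exact absurd (Hlocal hX hadj hp1 hpb h1 h2 h) (fun f => f)
      have hlt : X.dist p z₂ < n := by omega
      exact ih (X.dist p z₂) hlt p z₂ w rfl hside h2 (by unfold Btw; omega)

end walls

section gates
variable (hX : MedianGraph X)
include hX

/-- Every nonempty convex set has a gate for every vertex. -/
lemma gate_exists {C : Set V} (hC : IsConvex X C) {c₀ : V} (hc₀ : c₀ ∈ C) (w : V) :
    ∃ g ∈ C, ∀ c ∈ C, Btw X w g c := by
  classical
  have hne : {n : ℕ | ∃ c ∈ C, X.dist w c = n}.Nonempty := ⟨X.dist w c₀, c₀, hc₀, rfl⟩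
  obtain ⟨g, hgC, hgd⟩ : ∃ g ∈ C, X.dist w g = sInf {n : ℕ | ∃ c ∈ C, X.dist w c = n} :=
    by obtain ⟨c, hc, hd⟩ := Nat.sInf_mem hne; exact ⟨c, hc, hd⟩
  have hmin : ∀ c ∈ C, X.dist w g ≤ X.dist w c := by
    intro c hc
    rw [hgd]
    exact Nat.sInf_le ⟨c, hc, rfl⟩
  refine ⟨g, hgC, fun c hc => ?_⟩
  obtain ⟨m, h1, h2, h3⟩ := med_exists hX w g c
  have hmC : m ∈ C := hC g hgC c hc m h2
  have hle : X.dist w m ≤ X.dist w g := by unfold Btw at h1; omega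
  have hge : X.dist w g ≤ X.dist w m := hmin m hmC
  have h0 : X.dist m g = 0 := by unfold Btw at h1; omega
  have := eq0 hX h0
  subst this
  exact h3

/-- Separation: if `w` is not between `a` and `c`, there is an edge whose halfspace
contains `a` and `c` but not `w`. -/
lemma sep {a c w : V} (h : ¬ Btw X a w c) :
    ∃ e e' : V, X.Adj e e' ∧
      X.dist a e' = X.dist a e + 1 ∧ X.dist c e' = X.dist c e + 1 ∧
      X.dist w e = X.dist w e' + 1 := by
  obtain ⟨m, h1, h2, h3⟩ := med_exists hX a w c
  have hmw : m ≠ w := by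
    intro hmw; subst hmw; exact h h3
  have hne : X.dist w m ≠ 0 := fun h0 => hmw (eq0 hX h0).symm
  obtain ⟨p, hp1, hp2⟩ := exists_step hX hne
  have hdp : X.dist w p = 1 := adj_dist hX hp1
  -- p ∈ I(w, m) ⊆ I(w, a) and ⊆ I(w, c)
  have hpm : Btw X w p m := by unfold Btw; omega
  have hpa : Btw X w p a := btw_trans hX (btw_symm hX h1) hpm
  have hpc : Btw X w p c := btw_trans hX h2 hpm
  refine ⟨p, w, hp1.symm, ?_, ?_, ?_⟩
  · unfold Btw at hpa
    have e1 : X.dist a p = X.dist p a := dcomm a p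
    have e2 : X.dist a w = X.dist w a := dcomm a w
    omega
  · unfold Btw at hpc
    have e1 : X.dist c p = X.dist p c := dcomm c p
    have e2 : X.dist c w = X.dist w c := dcomm c w
    omega
  · simp [SimpleGraph.dist_self, hdp]

/-- Join-hull commutativity: the union of intervals from a point to a
nonempty convex set is convex. -/
lemma jhc {C : Set V} (hC : IsConvex X C) {c₀ : V} (hc₀ : c₀ ∈ C) (a : V) :
    IsConvex X {w : V | ∃ c ∈ C, Btw X a w c} := by
  rintro x ⟨c₁, hc₁, hx⟩ y ⟨c₂, hc₂, hy⟩ w hw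
  have hwb : Btw X x w y := hw
  obtain ⟨g, hgC, hgate⟩ := gate_exists hX hC hc₀ w
  refine ⟨g, hgC, ?_⟩
  by_contra hcon
  obtain ⟨e, e', hee, ha, hg, hwside⟩ := sep hX hcon
  -- any point of C on the e' side forces g on the e' side, contradiction
  have hCside : ∀ c ∈ C, X.dist c e' = X.dist c e + 1 := by
    intro c hc
    rcases adj_succ hX hee c with hcs | hcs
    · exact hcs
    · exfalso
      -- c on the e' side, w on the e' side, g between them
      have hgw : X.dist g e = X.dist g e' + 1 :=
        side_convex hX hee.symm (X.dist w c) w c g rfl hwside hcs (hgate c hc)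
      omega
  -- so c₁, c₂ are on the e side, hence so are x, y, hence so is w
  have hxside : X.dist x e' = X.dist x e + 1 :=
    side_convex hX hee (X.dist a c₁) a c₁ x rfl ha (hCside c₁ hc₁) hx
  have hyside : X.dist y e' = X.dist y e + 1 :=
    side_convex hX hee (X.dist a c₂) a c₂ y rfl ha (hCside c₂ hc₂) hy
  have hwside' : X.dist w e' = X.dist w e + 1 :=
    side_convex hX hee (X.dist x y) x y w rfl hxside hyside hwb
  omega

end gates

section finiteness
variable (hX : MedianGraph X)
include hX

/-- Key uniqueness: two "new atoms" over `p` inside `I(u,q)` coincide. -/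
lemma atom_unique {u u' w p q : V} {j : ℕ}
    (huu' : X.Adj u u') (huw : X.Adj u w) (hpq : X.Adj p q)
    (dup : X.dist u p = j) (duq : X.dist u q = j + 1)
    (du'q : X.dist u' q = j) (du'p : X.dist u' p = j + 1)
    (dwq : X.dist w q = j) (dwp : X.dist w p = j + 1) : w = u' := by
  by_contra hne
  -- w and u' are at distance 2
  have hwu' : X.dist w u' = 2 := by
    have hle : X.dist w u' ≤ 2 := by
      have h := tri hX w u u'
      rw [dcomm w u, adj_dist hX huw, adj_dist hX huu'] at h
      omega
    have h0 : X.dist w u' ≠ 0 := fun h => hne (eq0 hX h)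
    have h1 : X.dist w u' ≠ 1 := fun h =>
      triangle_free hX huw ((X.dist_eq_one_iff_adj).1 h) huu'
    omega
  -- m = median of (w, u', q)
  obtain ⟨m, hm1, hm2, hm3⟩ := med_exists hX w u' q
  unfold Btw at hm1 hm2 hm3
  have hcm : X.dist u' m = X.dist m u' := dcomm u' m
  have hwm : X.dist w m = 1 ∧ X.dist m u' = 1 ∧ X.dist m q = j - 1 ∧ 1 ≤ j := by
    refine ⟨by omega, by omega, by omega, by omega⟩
  obtain ⟨hwm1, hmu', hmq, hj⟩ := hwm
  have hum : X.dist u m = 2 := by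
    have h1 : X.dist u q ≤ X.dist u m + X.dist m q := tri hX u m q
    have h2 : X.dist u m ≤ X.dist u w + X.dist w m := tri hX u w m
    rw [adj_dist hX huw] at h2
    omega
  -- the side of m relative to the edge pq
  rcases adj_succ hX hpq m with hmp | hmp
  · -- X.dist m q = X.dist m p + 1 : impossible since then u' is too close to p
    have h1 : X.dist u' p ≤ X.dist u' m + X.dist m p := tri hX u' m p
    have h2 : X.dist u' m = X.dist m u' := dcomm u' m
    omega
  · -- X.dist m p = X.dist m q + 1
    -- t = median of (u, m, p)
    obtain ⟨t, ht1, ht2, ht3⟩ := med_exists hX u m p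
    unfold Btw at ht1 ht2 ht3
    have hmt : X.dist m t = X.dist t m := dcomm m t
    have htvals : X.dist u t = 1 ∧ X.dist t m = 1 ∧ X.dist t p = j - 1 := by omega
    obtain ⟨hut, htm, htp⟩ := htvals
    have htw : t ≠ w := by
      intro h; rw [h] at htp; omega
    have htu' : t ≠ u' := by
      intro h; rw [h] at htp; omega
    -- w, u', t are three common neighbours of u and m
    have humne : u ≠ m := fun h => by rw [h, SimpleGraph.dist_self] at hum; omega
    exact no_K23 hX humne huw ((X.dist_eq_one_iff_adj).1 (by rw [dcomm]; exact hwm1))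
      huu' ((X.dist_eq_one_iff_adj).1 hmu')
      ((X.dist_eq_one_iff_adj).1 hut) ((X.dist_eq_one_iff_adj).1 (by rw [dcomm]; exact htm))
      hne (Ne.symm htw) (Ne.symm htu')

/-- The join construction: a finite set of neighbours of `u` inside `I(u,v)` has an
upper bound `p` in `I(u,v)` at distance exactly the cardinality, whose interval
captures exactly those neighbours. -/
lemma join_lemma (u v : V) :
    ∀ F : Finset V, (∀ w ∈ F, X.Adj u w ∧ Btw X u w v) →
    ∃ p : V, Btw X u p v ∧ X.dist u p = F.card ∧ (∀ w ∈ F, Btw X u w p) ∧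
      (∀ w : V, X.Adj u w → Btw X u w p → w ∈ F) := by
  classical
  intro F
  induction F using Finset.induction_on with
  | empty =>
    intro _
    refine ⟨u, btw_refl_left hX u v, by simp [SimpleGraph.dist_self], by simp, ?_⟩
    intro w hadj hbw
    exfalso
    unfold Btw at hbw
    rw [SimpleGraph.dist_self] at hbw
    have h0 : X.dist u w = 0 := by omega
    have h2 := eq0 hX h0
    rw [← h2] at hadj
    exact X.loopless.irrefl u hadj
  | insert u' F hu' ih =>
    intro hF
    obtain ⟨p, hpv, hpd, hbelow, hatoms⟩ := ih (fun w hw => hF w (Finset.mem_insert_of_mem hw))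
    obtain ⟨hadj_u', hbv⟩ := hF u' (Finset.mem_insert_self u' F)
    set j := F.card with hj
    set n := X.dist u v with hn
    have h1 : X.dist u u' = 1 := adj_dist hX hadj_u'
    have hU : ¬ Btw X u u' p := fun h => hu' (hatoms u' hadj_u' h)
    have c1 : X.dist p u' = X.dist u' p := dcomm p u'
    have c2 : X.dist p u = X.dist u p := dcomm p u
    have du'p : X.dist u' p = j + 1 := by
      rcases adj_succ hX hadj_u' p with h | h
      · omega
      · exfalso; apply hU; unfold Btw; omega
    have du'v : X.dist u' v = n - 1 ∧ 1 ≤ n := by unfold Btw at hbv; omega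
    have dpv : X.dist p v = n - j ∧ j ≤ n := by unfold Btw at hpv; omega
    obtain ⟨q, hq1, hq2, hq3⟩ := med_exists hX p u' v
    unfold Btw at hq1 hq2 hq3
    have c3 : X.dist u' q = X.dist q u' := dcomm u' q
    have hqvals : X.dist p q = 1 ∧ X.dist q u' = j ∧ X.dist q v = n - j - 1 ∧ j + 1 ≤ n := by
      refine ⟨by omega, by omega, by omega, by omega⟩
    obtain ⟨hdpq, hdqu', hdqv, hjn⟩ := hqvals
    have hq_adj : X.Adj p q := (X.dist_eq_one_iff_adj).1 hdpq
    have duq : X.dist u q = j + 1 := by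
      have t1 : X.dist u q ≤ X.dist u p + X.dist p q := tri hX u p q
      have t2 : X.dist u v ≤ X.dist u q + X.dist q v := tri hX u q v
      omega
    refine ⟨q, ?_, ?_, ?_, ?_⟩
    · unfold Btw; omega
    · rw [Finset.card_insert_of_notMem hu']; omega
    · intro w hw
      rcases Finset.mem_insert.1 hw with rfl | hwF
      · unfold Btw; omega
      · have hupq : Btw X u p q := by unfold Btw; omega
        exact btw_trans hX hupq (hbelow w hwF)
    · intro w hadj_w hbw
      have hdw : X.dist u w = 1 := adj_dist hX hadj_w
      have hdwq : X.dist w q = j := by unfold Btw at hbw; omega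
      rcases adj_succ hX hq_adj w with h | h
      · -- X.dist w q = X.dist w p + 1, so w is below p
        have : Btw X u w p := by unfold Btw; omega
        exact Finset.mem_insert_of_mem (hatoms w hadj_w this)
      · -- X.dist w p = X.dist w q + 1 = j + 1, so w = u' by atom uniqueness
        have := atom_unique hX hadj_u' hadj_w hq_adj (by omega) duq (by omega)
          (by omega) (by omega) (by omega)
        rw [this]
        exact Finset.mem_insert_self u' F

/-- The set of neighbours of `u` on geodesics to `v` is finite. -/
lemma nbrs_finite (u v : V) : {p : V | X.Adj u p ∧ Btw X u p v}.Finite := by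
  by_contra h
  obtain ⟨F, hFsub, hFcard⟩ :=
    Set.Infinite.exists_subset_card_eq h (X.dist u v + 1)
  obtain ⟨p, hpv, hpd, -, -⟩ := join_lemma hX u v F (fun w hw => hFsub hw)
  unfold Btw at hpv
  omega

/-- Intervals in a median graph are finite. -/
lemma interval_finite (u v : V) : {w : V | Btw X u w v}.Finite := by
  obtain ⟨n, hn⟩ : ∃ n, X.dist u v = n := ⟨_, rfl⟩
  induction n using Nat.strong_induction_on generalizing u v with
  | _ n ih =>
    have hsub : {w : V | Btw X u w v} ⊆
        insert u (⋃ p ∈ {p : V | X.Adj u p ∧ Btw X u p v}, {w : V | Btw X p w v}) := by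
      intro w hw
      by_cases hwu : w = u
      · exact Set.mem_insert_iff.2 (Or.inl hwu)
      · refine Set.mem_insert_iff.2 (Or.inr ?_)
        have hne : X.dist u w ≠ 0 := fun h0 => hwu (eq0 hX h0).symm
        obtain ⟨p, hp1, hp2⟩ := exists_step hX hne
        have hw' : X.dist u w + X.dist w v = X.dist u v := hw
        have hd1 : X.dist u p = 1 := adj_dist hX hp1
        have t1 : X.dist u v ≤ X.dist u p + X.dist p v := tri hX u p v
        have t2 : X.dist p v ≤ X.dist p w + X.dist w v := tri hX p w v
        have hb1 : X.dist u p + X.dist p v = X.dist u v := by omega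
        have hpN : p ∈ {p : V | X.Adj u p ∧ Btw X u p v} := ⟨hp1, hb1⟩
        refine Set.mem_biUnion hpN ?_
        show X.dist p w + X.dist w v = X.dist p v
        omega
    refine Set.Finite.subset (Set.Finite.insert u ?_) hsub
    refine Set.Finite.biUnion (nbrs_finite hX u v) ?_
    rintro p ⟨hadj, hbp⟩
    have hd1 : X.dist u p = 1 := adj_dist hX hadj
    have : X.dist p v < n := by unfold Btw at hbp; omega
    exact ih (X.dist p v) this p v rfl

/-- Every finite set of vertices is contained in a finite convex set. -/
lemma exists_finite_convex_superset (S : Set V) (hS : S.Finite) :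
    ∃ D : Set V, D.Finite ∧ IsConvex X D ∧ S ⊆ D := by
  refine Set.Finite.induction_on
    (motive := fun s _ => ∃ D : Set V, D.Finite ∧ IsConvex X D ∧ s ⊆ D) S hS
    ⟨∅, Set.finite_empty, fun x hx => absurd hx (Set.notMem_empty x),
      Set.empty_subset _⟩ ?_
  intro a T ha hTfin ihT
  obtain ⟨D, hDfin, hDconv, hTD⟩ := ihT
  rcases D.eq_empty_or_nonempty with rfl | ⟨c₀, hc₀⟩
  · refine ⟨{a}, Set.finite_singleton a, ?_, ?_⟩
    · intro x hx y hy w hw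
      have hxa : x = a := hx
      have hya : y = a := hy
      rw [hxa, hya, SimpleGraph.dist_self] at hw
      have h0 : X.dist a w = 0 := by omega
      show w = a
      exact (eq0 hX h0).symm
    · intro t ht
      rcases Set.mem_insert_iff.1 ht with rfl | htT
      · rfl
      · exact absurd (hTD htT) (Set.notMem_empty t)
  · refine ⟨{w : V | ∃ c ∈ D, Btw X a w c}, ?_, jhc hX hDconv hc₀ a, ?_⟩
    · refine Set.Finite.subset (Set.Finite.biUnion hDfin
        (fun c _ => interval_finite hX a c)) ?_
      rintro w ⟨c, hc, hw⟩
      exact Set.mem_biUnion hc hw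
    · intro t ht
      rcases Set.mem_insert_iff.1 ht with rfl | htT
      · exact ⟨c₀, hc₀, btw_refl_left hX t c₀⟩
      · exact ⟨t, hTD htT, btw_refl_right hX a t⟩

end finiteness

end MGAux

/-- In a median graph, the convex hull of a finite set of vertices is finite. -/
theorem convexHull_finite {V : Type*} (X : SimpleGraph V) (hX : MedianGraph X)
    (S : Set V) (hS : S.Finite) :
    (⋂₀ {C : Set V | IsConvex X C ∧ S ⊆ C}).Finite := by
  obtain ⟨D, hDfin, hDconv, hSD⟩ := MGAux.exists_finite_convex_superset hX S hS
  exact hDfin.subset (Set.sInter_subset_of_mem ⟨hDconv, hSD⟩)
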